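/- Let U ⊆ ℝⁿ be bounded open, α, r > 0, and let f, g ∈ C(U) be bounded with osc_U f ≤ α and osc_U g ≤ α. Suppose 0 < t < t₀(α, r) and that for every x ∈ U_{2r}: T^t f(x) + T_t f(x) − 2 f(x) ≥ 0 ≥ T^t g(x) + T_t g(x) − 2 g(x). Then either max over the closure of U_r of (f − g) equals the max of (f − g) over (closure of U_r) \ U_{2r}, or else there exists x₀ ∈ U_{2r} such that f(x₀) = T^t f(x₀) = T_t f(x₀) and g(x₀) = T^t g(x₀) = T_t g(x₀). -/

import Mathlib

open Set Metric MeasureTheory Filter Bornology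
open scoped RealInnerProductSpace

noncomputable section

abbrev Euc (n : ℕ) := EuclideanSpace ℝ (Fin n)

variable {n : ℕ}

/-- The Lagrangian of `H`, an extended real number. -/
def Lag (H : Euc n → ℝ) (q : Euc n) : EReal :=
  ⨆ p : Euc n, ((⟪p, q⟫ - H p : ℝ) : EReal)

/-- `T^t u (x)`, with supremum taken over `y ∈ S`. Points `y` where the Lagrangian term
is `+∞` contribute nothing, since no real number equals `-∞`. -/
def TupOn (H : Euc n → ℝ) (S : Set (Euc n)) (u : Euc n → ℝ) (t : ℝ) (x : Euc n) : ℝ :=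
  if t = 0 then u x
  else sSup {r : ℝ | ∃ y ∈ S, (r : EReal) = (u y : EReal) - (t : EReal) * Lag H (t⁻¹ • (y - x))}

/-- `T_t u (x)`, with infimum taken over `y ∈ S`. -/
def TdnOn (H : Euc n → ℝ) (S : Set (Euc n)) (u : Euc n → ℝ) (t : ℝ) (x : Euc n) : ℝ :=
  if t = 0 then u x
  else sInf {r : ℝ | ∃ y ∈ S, (r : EReal) = (u y : EReal) + (t : EReal) * Lag H (t⁻¹ • (x - y))}

/-- `S⁺ u (x) = limsup_{t ↓ 0} (T^t u(x) - u(x))/t`. -/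
def Splus (H : Euc n → ℝ) (U : Set (Euc n)) (u : Euc n → ℝ) (x : Euc n) : ℝ :=
  limsup (fun t => (TupOn H U u t x - u x) / t) (nhdsWithin 0 (Ioi 0))

/-- The oscillation `osc_U u = sup_U u - inf_U u`. -/
def oscOn (u : Euc n → ℝ) (U : Set (Euc n)) : ℝ := sSup (u '' U) - sInf (u '' U)

/-- `U_r = {x ∈ U : dist(x, ∂U) > r}`. -/
def inUr (U : Set (Euc n)) (r : ℝ) : Set (Euc n) := {x ∈ U | r < infDist x (frontier U)}

/-- The cone function `C_k(x) = max {p·x : H(p) = k}`. -/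
def coneFn (H : Euc n → ℝ) (k : ℝ) (x : Euc n) : ℝ :=
  sSup {r : ℝ | ∃ p, H p = k ∧ r = ⟪p, x⟫}

/-- The subdifferential of `H` at `p`. -/
def subdiff (H : Euc n → ℝ) (p : Euc n) : Set (Euc n) :=
  {q | ∀ p', H p + ⟪q, p' - p⟫ ≤ H p'}

/-- `Γ_k`: subgradients of `H` at points of the level set `H⁻¹(k)`. -/
def GammaSet (H : Euc n → ℝ) (k : ℝ) : Set (Euc n) :=
  {q | ∃ p, H p = k ∧ q ∈ subdiff H p}

/-- `W_k`: subgradients of `H` at points of the sublevel set `H⁻¹([0,k])`. -/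
def WSet (H : Euc n → ℝ) (k : ℝ) : Set (Euc n) :=
  {q | ∃ p, 0 ≤ H p ∧ H p ≤ k ∧ q ∈ subdiff H p}

/-- `u ∈ Lip_loc(U)`: `u` is locally Lipschitz on `U`. -/
def LocLipOn (u : Euc n → ℝ) (U : Set (Euc n)) : Prop :=
  ∀ x ∈ U, ∃ K : NNReal, ∃ s ∈ nhdsWithin x U, LipschitzOnWith K u s

/-- `ess sup_V H(Dv)`, defined to be `+∞` if `v` is not locally Lipschitz in `V`.
Here `Dv` is the a.e.-defined gradient (Rademacher). -/
def essSupH (H : Euc n → ℝ) (V : Set (Euc n)) (v : Euc n → ℝ) : EReal :=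
  haveI := Classical.propDecidable (LocLipOn v V)
  if LocLipOn v V then
    essSup (fun x => ((H (gradient v x) : ℝ) : EReal)) (volume.restrict V)
  else ⊤

/-- `u` is absolutely subminimizing for `H` in `U`. -/
def AbsSubmin (H : Euc n → ℝ) (U : Set (Euc n)) (u : Euc n → ℝ) : Prop :=
  LocLipOn u U ∧
  ∀ V : Set (Euc n), IsOpen V → IsCompact (closure V) → closure V ⊆ U →
    ∀ v : Euc n → ℝ, LocLipOn v V → ContinuousOn v (closure V) →
      EqOn v u (frontier V) → (∀ x ∈ V, v x ≤ u x) →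
        essSupH H V u ≤ essSupH H V v

/-- `u` is absolutely superminimizing for `H` in `U`. -/
def AbsSupermin (H : Euc n → ℝ) (U : Set (Euc n)) (u : Euc n → ℝ) : Prop :=
  LocLipOn u U ∧
  ∀ V : Set (Euc n), IsOpen V → IsCompact (closure V) → closure V ⊆ U →
    ∀ v : Euc n → ℝ, LocLipOn v V → ContinuousOn v (closure V) →
      EqOn v u (frontier V) → (∀ x ∈ V, u x ≤ v x) →
        essSupH H V u ≤ essSupH H V v

/-- `u` satisfies comparisons with cones from above in `U`. -/
def CmpConesAbove (H : Euc n → ℝ) (U : Set (Euc n)) (u : Euc n → ℝ) : Prop :=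
  ∀ k : ℝ, 0 ≤ k → ∀ V : Set (Euc n), IsOpen V → IsCompact (closure V) → closure V ⊆ U →
    ∀ x₀, x₀ ∉ V →
      sSup ((fun x => u x - coneFn H k (x - x₀)) '' closure V) =
      sSup ((fun x => u x - coneFn H k (x - x₀)) '' frontier V)

/-- `u` satisfies the convexity criterion in `U`. -/
def ConvexityCriterion (H : Euc n → ℝ) (U : Set (Euc n)) (u : Euc n → ℝ) : Prop :=
  ∀ V : Set (Euc n), IsOpen V → IsCompact (closure V) → closure V ⊆ U →
    ∃ δ > (0:ℝ), ∀ x ∈ V, ConvexOn ℝ (Icc 0 δ) (fun t => TupOn H U u t x)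

/-- `u` satisfies the pointwise convexity criterion in `U`. -/
def PtwiseCC (H : Euc n → ℝ) (U : Set (Euc n)) (u : Euc n → ℝ) : Prop :=
  UpperSemicontinuousOn (Splus H U u) U ∧
  ∀ x ∈ U, ∃ δ > (0:ℝ), ConvexOn ℝ (Icc 0 δ) (fun t => TupOn H U u t x)

end


section AuxStationary

open scoped RealInnerProductSpace

variable {n : ℕ} {H : Euc n → ℝ}

lemma lag_nonneg (hH0 : H 0 = 0) (q : Euc n) : (0 : EReal) ≤ Lag H q := by
  have h := le_iSup (fun p : Euc n => ((⟪p, q⟫ - H p : ℝ) : EReal)) 0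
  simpa [Lag, hH0] using h

lemma lag_zero (hH0 : H 0 = 0) (hnn : ∀ p, 0 ≤ H p) : Lag H (0 : Euc n) = 0 := by
  refine le_antisymm ?_ (lag_nonneg hH0 0)
  simp only [Lag]
  refine iSup_le fun p => ?_
  have h : (⟪p, (0 : Euc n)⟫ - H p : ℝ) ≤ 0 := by
    rw [inner_zero_right]; linarith [hnn p]
  exact EReal.coe_nonpos.2 h

/-- The set whose supremum is `T^t u(x)` (for `t ≠ 0`). -/
def upS (H : Euc n → ℝ) (S : Set (Euc n)) (u : Euc n → ℝ) (t : ℝ) (x : Euc n) : Set ℝ :=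
  {r : ℝ | ∃ y ∈ S, (r : EReal) = (u y : EReal) - (t : EReal) * Lag H (t⁻¹ • (y - x))}

/-- The set whose infimum is `T_t u(x)` (for `t ≠ 0`). -/
def dnS (H : Euc n → ℝ) (S : Set (Euc n)) (u : Euc n → ℝ) (t : ℝ) (x : Euc n) : Set ℝ :=
  {r : ℝ | ∃ y ∈ S, (r : EReal) = (u y : EReal) + (t : EReal) * Lag H (t⁻¹ • (x - y))}

lemma TupOn_eq (S : Set (Euc n)) (u : Euc n → ℝ) {t : ℝ} (ht : t ≠ 0) (x : Euc n) :
    TupOn H S u t x = sSup (upS H S u t x) := by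
  simp only [TupOn, if_neg ht]; rfl

lemma TdnOn_eq (S : Set (Euc n)) (u : Euc n → ℝ) {t : ℝ} (ht : t ≠ 0) (x : Euc n) :
    TdnOn H S u t x = sInf (dnS H S u t x) := by
  simp only [TdnOn, if_neg ht]; rfl

lemma upS_elim (hH0 : H 0 = 0) {S : Set (Euc n)} {u : Euc n → ℝ} {t : ℝ} {x : Euc n} {r : ℝ}
    (ht : 0 < t) (hr : r ∈ upS H S u t x) :
    ∃ y ∈ S, ∃ l : ℝ, 0 ≤ l ∧ (t : EReal) * Lag H (t⁻¹ • (y - x)) = (l : ℝ) ∧ r = u y - l := by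
  obtain ⟨y, hy, heq⟩ := hr
  set L := (t : EReal) * Lag H (t⁻¹ • (y - x)) with hL
  have hL0 : (0 : EReal) ≤ L := mul_nonneg (EReal.coe_nonneg.2 ht.le) (lag_nonneg hH0 _)
  have hbot : L ≠ ⊥ := fun h => by simp [h] at hL0
  have htop : L ≠ ⊤ := by
    intro h
    rw [h, EReal.sub_top] at heq
    exact EReal.coe_ne_bot r heq
  refine ⟨y, hy, L.toReal, ?_, ?_, ?_⟩
  · exact EReal.coe_nonneg.1 (by rw [EReal.coe_toReal htop hbot]; exact hL0)
  · exact (EReal.coe_toReal htop hbot).symm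
  · have h2 : (r : EReal) = ((u y - L.toReal : ℝ) : EReal) := by
      rw [EReal.coe_sub, EReal.coe_toReal htop hbot]; exact heq
    exact EReal.coe_injective h2

lemma dnS_elim (hH0 : H 0 = 0) {S : Set (Euc n)} {u : Euc n → ℝ} {t : ℝ} {x : Euc n} {r : ℝ}
    (ht : 0 < t) (hr : r ∈ dnS H S u t x) :
    ∃ y ∈ S, ∃ l : ℝ, 0 ≤ l ∧ (t : EReal) * Lag H (t⁻¹ • (x - y)) = (l : ℝ) ∧ r = u y + l := by
  obtain ⟨y, hy, heq⟩ := hr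
  set L := (t : EReal) * Lag H (t⁻¹ • (x - y)) with hL
  have hL0 : (0 : EReal) ≤ L := mul_nonneg (EReal.coe_nonneg.2 ht.le) (lag_nonneg hH0 _)
  have hbot : L ≠ ⊥ := fun h => by simp [h] at hL0
  have htop : L ≠ ⊤ := by
    intro h
    rw [h, EReal.coe_add_top] at heq
    exact EReal.coe_ne_top r heq
  refine ⟨y, hy, L.toReal, ?_, ?_, ?_⟩
  · exact EReal.coe_nonneg.1 (by rw [EReal.coe_toReal htop hbot]; exact hL0)
  · exact (EReal.coe_toReal htop hbot).symm
  · have h2 : (r : EReal) = ((u y + L.toReal : ℝ) : EReal) := by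
      rw [EReal.coe_add, EReal.coe_toReal htop hbot]; exact heq
    exact EReal.coe_injective h2

lemma upS_intro {S : Set (Euc n)} (u : Euc n → ℝ) {t : ℝ} {x y : Euc n} {l : ℝ} (hy : y ∈ S)
    (hl : (t : EReal) * Lag H (t⁻¹ • (y - x)) = (l : ℝ)) : u y - l ∈ upS H S u t x :=
  ⟨y, hy, by rw [hl, ← EReal.coe_sub]⟩

lemma dnS_intro {S : Set (Euc n)} (u : Euc n → ℝ) {t : ℝ} {x y : Euc n} {l : ℝ} (hy : y ∈ S)
    (hl : (t : EReal) * Lag H (t⁻¹ • (x - y)) = (l : ℝ)) : u y + l ∈ dnS H S u t x :=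
  ⟨y, hy, by rw [hl, ← EReal.coe_add]⟩

lemma lag_term_zero (hH0 : H 0 = 0) (hnn : ∀ p, 0 ≤ H p) (t : ℝ) (x : Euc n) :
    (t : EReal) * Lag H (t⁻¹ • (x - x)) = ((0 : ℝ) : EReal) := by
  rw [sub_self, smul_zero, lag_zero hH0 hnn, mul_zero]
  simp

lemma upS_self (hH0 : H 0 = 0) (hnn : ∀ p, 0 ≤ H p) (u : Euc n → ℝ) {S : Set (Euc n)} (t : ℝ)
    {x : Euc n} (hx : x ∈ S) : u x ∈ upS H S u t x := by
  have h := upS_intro (H := H) u hx (lag_term_zero hH0 hnn t x)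
  simpa using h

lemma dnS_self (hH0 : H 0 = 0) (hnn : ∀ p, 0 ≤ H p) (u : Euc n → ℝ) {S : Set (Euc n)} (t : ℝ)
    {x : Euc n} (hx : x ∈ S) : u x ∈ dnS H S u t x := by
  have h := dnS_intro (H := H) u hx (lag_term_zero hH0 hnn t x)
  simpa using h

lemma upS_bddAbove (hH0 : H 0 = 0) {S : Set (Euc n)} {u : Euc n → ℝ} {t : ℝ} {x : Euc n} {B : ℝ}
    (ht : 0 < t) (hB : ∀ y ∈ S, u y ≤ B) : BddAbove (upS H S u t x) := by
  refine ⟨B, fun r hr => ?_⟩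
  obtain ⟨y, hy, l, hl0, _, hrl⟩ := upS_elim hH0 ht hr
  have := hB y hy
  linarith

lemma dnS_bddBelow (hH0 : H 0 = 0) {S : Set (Euc n)} {u : Euc n → ℝ} {t : ℝ} {x : Euc n} {B : ℝ}
    (ht : 0 < t) (hB : ∀ y ∈ S, B ≤ u y) : BddBelow (dnS H S u t x) := by
  refine ⟨B, fun r hr => ?_⟩
  obtain ⟨y, hy, l, hl0, _, hrl⟩ := dnS_elim hH0 ht hr
  have := hB y hy
  linarith

lemma sSup_upS_le (hH0 : H 0 = 0) (hnn : ∀ p, 0 ≤ H p) {S : Set (Euc n)} {u v : Euc n → ℝ}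
    {t : ℝ} {x : Euc n} {c : ℝ} (ht : 0 < t) (hx : x ∈ S)
    (hcmp : ∀ y ∈ S, u y ≤ v y + c) (hbdd : BddAbove (upS H S v t x)) :
    sSup (upS H S u t x) ≤ sSup (upS H S v t x) + c := by
  refine csSup_le ⟨u x, upS_self hH0 hnn u t hx⟩ ?_
  rintro rr hrr
  obtain ⟨y, hy, l, hl0, hleq, hrl⟩ := upS_elim hH0 ht hrr
  have hmem := upS_intro (H := H) v hy hleq
  have h1 := le_csSup hbdd hmem
  have h2 := hcmp y hy
  linarith

lemma sInf_dnS_le (hH0 : H 0 = 0) (hnn : ∀ p, 0 ≤ H p) {S : Set (Euc n)} {u v : Euc n → ℝ}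
    {t : ℝ} {x : Euc n} {c : ℝ} (ht : 0 < t) (hx : x ∈ S)
    (hcmp : ∀ y ∈ S, u y ≤ v y + c) (hbdd : BddBelow (dnS H S u t x)) :
    sInf (dnS H S u t x) ≤ sInf (dnS H S v t x) + c := by
  have key : ∀ rr ∈ dnS H S v t x, sInf (dnS H S u t x) - c ≤ rr := by
    intro rr hrr
    obtain ⟨y, hy, l, hl0, hleq, hrl⟩ := dnS_elim hH0 ht hrr
    have hmem := dnS_intro (H := H) u hy hleq
    have h1 := csInf_le hbdd hmem
    have h2 := hcmp y hy
    linarith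
  have h := le_csInf ⟨v x, dnS_self hH0 hnn v t hx⟩ key
  linarith

end AuxStationary

/-- The stationary point lemma. -/
theorem stationary_point_lemma {n : ℕ} (hn : 1 ≤ n) (H : Euc n → ℝ)
    (hHconv : ConvexOn ℝ Set.univ H) (hH0 : H 0 = 0) (hHnonneg : ∀ p, 0 ≤ H p)
    (hHzb : Bornology.IsBounded {p : Euc n | H p = 0})
    (hHzi : interior {p : Euc n | H p = 0} = ∅)
    (U : Set (Euc n)) (hU : IsOpen U) (hUb : Bornology.IsBounded U)
    (α r t t₀ : ℝ) (hα : 0 < α) (hr : 0 < r) (ht₀ : 0 < t₀)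
    (ht₀up : ∀ w : Euc n → ℝ, UpperSemicontinuousOn w U → Bornology.IsBounded (w '' U) →
      oscOn w U ≤ α → ∀ x ∈ U, ∀ s : ℝ, 0 < s → s < t₀ →
        TupOn H U w s x = TupOn H (ball x r ∩ U) w s x)
    (ht₀dn : ∀ w : Euc n → ℝ, LowerSemicontinuousOn w U → Bornology.IsBounded (w '' U) →
      oscOn w U ≤ α → ∀ x ∈ U, ∀ s : ℝ, 0 < s → s < t₀ →
        TdnOn H U w s x = TdnOn H (ball x r ∩ U) w s x)
    (f g : Euc n → ℝ) (hf : ContinuousOn f U) (hg : ContinuousOn g U)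
    (hfb : Bornology.IsBounded (f '' U)) (hgb : Bornology.IsBounded (g '' U))
    (hfo : oscOn f U ≤ α) (hgo : oscOn g U ≤ α)
    (ht : 0 < t) (htt₀ : t < t₀)
    (hfg : ∀ x ∈ inUr U (2 * r),
      0 ≤ TupOn H U f t x + TdnOn H U f t x - 2 * f x ∧
      TupOn H U g t x + TdnOn H U g t x - 2 * g x ≤ 0) :
    sSup ((fun x => f x - g x) '' closure (inUr U r)) =
        sSup ((fun x => f x - g x) '' (closure (inUr U r) \ inUr U (2 * r))) ∨
      ∃ x₀ ∈ inUr U (2 * r),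
        (f x₀ = TupOn H U f t x₀ ∧ f x₀ = TdnOn H U f t x₀) ∧
        (g x₀ = TupOn H U g t x₀ ∧ g x₀ = TdnOn H U g t x₀) := by
  classical
  rcases (inUr U r).eq_empty_or_nonempty with hne | ⟨w0, hw0⟩
  · left; rw [hne]; simp
  have htne : t ≠ 0 := ne_of_gt ht
  -- the compact set K = closure (U_r)
  have hKU : closure (inUr U r) ⊆ U := by
    intro x hx
    have hxd : r ≤ infDist x (frontier U) := by
      have hcl : IsClosed {z : Euc n | r ≤ infDist z (frontier U)} :=
        isClosed_le continuous_const (continuous_infDist_pt _)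
      exact closure_minimal (fun y hy => le_of_lt hy.2) hcl hx
    by_contra hxU
    have hxcl : x ∈ closure U := closure_mono (fun y hy => hy.1) hx
    have : x ∈ frontier U := by
      rw [frontier_eq_closure_inter_closure]
      exact ⟨hxcl, subset_closure hxU⟩
    have h0 : infDist x (frontier U) = 0 := infDist_zero_of_mem this
    rw [h0] at hxd
    linarith
  have hKco : IsCompact (closure (inUr U r)) :=
    Metric.isCompact_of_isClosed_isBounded isClosed_closure
      ((hUb.subset (fun y hy => hy.1)).closure)
  have hKne : (closure (inUr U r)).Nonempty := ⟨w0, subset_closure hw0⟩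
  have hfgK : ContinuousOn (fun x => f x - g x) (closure (inUr U r)) :=
    (hf.mono hKU).sub (hg.mono hKU)
  have hbddK : BddAbove ((fun x => f x - g x) '' closure (inUr U r)) :=
    hKco.bddAbove_image hfgK
  -- maximizers of f - g on K
  have hAcl : IsClosed {x ∈ closure (inUr U r) |
      sSup ((fun x => f x - g x) '' closure (inUr U r)) ≤ f x - g x} := by
    have h := hfgK.preimage_isClosed_of_isClosed isClosed_closure
      (isClosed_Ici (a := sSup ((fun x => f x - g x) '' closure (inUr U r))))
    convert h using 1
    rfl
  have hAco : IsCompact {x ∈ closure (inUr U r) |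
      sSup ((fun x => f x - g x) '' closure (inUr U r)) ≤ f x - g x} :=
    hKco.of_isClosed_subset hAcl (fun x hx => hx.1)
  have hAne : {x ∈ closure (inUr U r) |
      sSup ((fun x => f x - g x) '' closure (inUr U r)) ≤ f x - g x}.Nonempty := by
    obtain ⟨z, hzK, hzmax⟩ := hKco.exists_isMaxOn hKne hfgK
    refine ⟨z, hzK, ?_⟩
    exact csSup_le (hKne.image _) (by rintro _ ⟨y, hyK, rfl⟩; exact hzmax hyK)
  obtain ⟨x₀, hx₀A, hx₀max⟩ :=
    hAco.exists_isMaxOn hAne (hf.mono (fun x hx => hKU hx.1))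
  by_cases halt : sSup ((fun x => f x - g x) '' closure (inUr U r)) =
      sSup ((fun x => f x - g x) '' (closure (inUr U r) \ inUr U (2 * r)))
  · exact Or.inl halt
  right
  -- x₀ must be in U_{2r}
  have hx₀2r : x₀ ∈ inUr U (2 * r) := by
    by_contra hcon
    apply halt
    have hx₀mem : x₀ ∈ closure (inUr U r) \ inUr U (2 * r) := ⟨hx₀A.1, hcon⟩
    have himsub : (fun x => f x - g x) '' (closure (inUr U r) \ inUr U (2 * r)) ⊆
        (fun x => f x - g x) '' closure (inUr U r) := image_mono diff_subset
    have h1 : sSup ((fun x => f x - g x) '' (closure (inUr U r) \ inUr U (2 * r))) ≤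
        sSup ((fun x => f x - g x) '' closure (inUr U r)) :=
      csSup_le_csSup hbddK ⟨_, mem_image_of_mem _ hx₀mem⟩ himsub
    have h2 : sSup ((fun x => f x - g x) '' closure (inUr U r)) ≤
        sSup ((fun x => f x - g x) '' (closure (inUr U r) \ inUr U (2 * r))) := by
      refine le_trans hx₀A.2 (le_csSup (hbddK.mono himsub) (mem_image_of_mem _ hx₀mem))
    exact le_antisymm h2 h1
  have hx₀U : x₀ ∈ U := hx₀2r.1
  have hx₀S : x₀ ∈ ball x₀ r ∩ U := ⟨mem_ball_self hr, hx₀U⟩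
  have hSU : ball x₀ r ∩ U ⊆ U := inter_subset_right
  have hSK : ball x₀ r ∩ U ⊆ closure (inUr U r) := by
    intro y hy
    refine subset_closure ⟨hy.2, ?_⟩
    have h1 : infDist x₀ (frontier U) ≤ infDist y (frontier U) + dist x₀ y :=
      infDist_le_infDist_add_dist
    have h2 : dist x₀ y < r := by rw [dist_comm]; exact mem_ball.1 hy.1
    have h3 := hx₀2r.2
    linarith
  -- comparison constant
  have hMc : sSup ((fun x => f x - g x) '' closure (inUr U r)) ≤ f x₀ - g x₀ := hx₀A.2
  have hcmp : ∀ y ∈ ball x₀ r ∩ U, f y ≤ g y + (f x₀ - g x₀) := by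
    intro y hy
    have h1 : f y - g y ≤ sSup ((fun x => f x - g x) '' closure (inUr U r)) :=
      le_csSup hbddK (mem_image_of_mem _ (hSK hy))
    linarith
  -- bounds for f and g on S
  obtain ⟨Bf, hBf⟩ := (isBounded_iff_bddBelow_bddAbove.1 hfb).2
  obtain ⟨bf, hbf⟩ := (isBounded_iff_bddBelow_bddAbove.1 hfb).1
  obtain ⟨Bg, hBg⟩ := (isBounded_iff_bddBelow_bddAbove.1 hgb).2
  obtain ⟨bg, hbg⟩ := (isBounded_iff_bddBelow_bddAbove.1 hgb).1
  have hBf' : ∀ y ∈ ball x₀ r ∩ U, f y ≤ Bf := fun y hy => hBf (mem_image_of_mem f (hSU hy))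
  have hbf' : ∀ y ∈ ball x₀ r ∩ U, bf ≤ f y := fun y hy => hbf (mem_image_of_mem f (hSU hy))
  have hBg' : ∀ y ∈ ball x₀ r ∩ U, g y ≤ Bg := fun y hy => hBg (mem_image_of_mem g (hSU hy))
  have hbg' : ∀ y ∈ ball x₀ r ∩ U, bg ≤ g y := fun y hy => hbg (mem_image_of_mem g (hSU hy))
  have bddAf : BddAbove (upS H (ball x₀ r ∩ U) f t x₀) := upS_bddAbove hH0 ht hBf'
  have bddAg : BddAbove (upS H (ball x₀ r ∩ U) g t x₀) := upS_bddAbove hH0 ht hBg'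
  have bddBf : BddBelow (dnS H (ball x₀ r ∩ U) f t x₀) := dnS_bddBelow hH0 ht hbf'
  have bddBg : BddBelow (dnS H (ball x₀ r ∩ U) g t x₀) := dnS_bddBelow hH0 ht hbg'
  -- rewrite the T operators
  have hfup : TupOn H U f t x₀ = sSup (upS H (ball x₀ r ∩ U) f t x₀) := by
    rw [ht₀up f hf.upperSemicontinuousOn hfb hfo x₀ hx₀U t ht htt₀, TupOn_eq _ _ htne]
  have hfdn : TdnOn H U f t x₀ = sInf (dnS H (ball x₀ r ∩ U) f t x₀) := by
    rw [ht₀dn f hf.lowerSemicontinuousOn hfb hfo x₀ hx₀U t ht htt₀, TdnOn_eq _ _ htne]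
  have hgup : TupOn H U g t x₀ = sSup (upS H (ball x₀ r ∩ U) g t x₀) := by
    rw [ht₀up g hg.upperSemicontinuousOn hgb hgo x₀ hx₀U t ht htt₀, TupOn_eq _ _ htne]
  have hgdn : TdnOn H U g t x₀ = sInf (dnS H (ball x₀ r ∩ U) g t x₀) := by
    rw [ht₀dn g hg.lowerSemicontinuousOn hgb hgo x₀ hx₀U t ht htt₀, TdnOn_eq _ _ htne]
  obtain ⟨hineq1, hineq2⟩ := hfg x₀ hx₀2r
  rw [hfup, hfdn] at hineq1
  rw [hgup, hgdn] at hineq2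
  -- basic inequalities
  have h5 : f x₀ ≤ sSup (upS H (ball x₀ r ∩ U) f t x₀) :=
    le_csSup bddAf (upS_self hH0 hHnonneg f t hx₀S)
  have h6 : sInf (dnS H (ball x₀ r ∩ U) f t x₀) ≤ f x₀ :=
    csInf_le bddBf (dnS_self hH0 hHnonneg f t hx₀S)
  have h7 : g x₀ ≤ sSup (upS H (ball x₀ r ∩ U) g t x₀) :=
    le_csSup bddAg (upS_self hH0 hHnonneg g t hx₀S)
  have h8 : sInf (dnS H (ball x₀ r ∩ U) g t x₀) ≤ g x₀ :=
    csInf_le bddBg (dnS_self hH0 hHnonneg g t hx₀S)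
  have h3 : sSup (upS H (ball x₀ r ∩ U) f t x₀) ≤
      sSup (upS H (ball x₀ r ∩ U) g t x₀) + (f x₀ - g x₀) :=
    sSup_upS_le hH0 hHnonneg ht hx₀S hcmp bddAg
  have h4 : sInf (dnS H (ball x₀ r ∩ U) f t x₀) ≤
      sInf (dnS H (ball x₀ r ∩ U) g t x₀) + (f x₀ - g x₀) :=
    sInf_dnS_le hH0 hHnonneg ht hx₀S hcmp bddBf
  -- the key limiting argument: sSup (upS f) ≤ f x₀
  have key : sSup (upS H (ball x₀ r ∩ U) f t x₀) ≤ f x₀ := by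
    have hseq : ∀ k : ℕ, ∃ y, y ∈ ball x₀ r ∩ U ∧
        sSup (upS H (ball x₀ r ∩ U) f t x₀) - 1 / (k + 1) ≤ f y ∧
        (f x₀ - g x₀) - 1 / (k + 1) ≤ f y - g y := by
      intro k
      have hpos : (0 : ℝ) < 1 / (k + 1) := by positivity
      have hlt : sSup (upS H (ball x₀ r ∩ U) f t x₀) - 1 / (k + 1) <
          sSup (upS H (ball x₀ r ∩ U) f t x₀) := by linarith
      obtain ⟨rr, hrrmem, hrrlt⟩ :=
        exists_lt_of_lt_csSup ⟨f x₀, upS_self hH0 hHnonneg f t hx₀S⟩ hlt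
      obtain ⟨y, hyS, l, hl0, hleq, hrl⟩ := upS_elim hH0 ht hrrmem
      have hgle : g y - l ≤ sSup (upS H (ball x₀ r ∩ U) g t x₀) :=
        le_csSup bddAg (upS_intro (H := H) g hyS hleq)
      exact ⟨y, hyS, by linarith, by linarith⟩
    choose y hyS hyf hyfg using hseq
    have hyK : ∀ k, y k ∈ closure (inUr U r) := fun k => hSK (hyS k)
    obtain ⟨z, hzK, φ, hφ, hconv⟩ := hKco.tendsto_subseq hyK
    have hmemK : Tendsto (fun k => y (φ k)) atTop (nhdsWithin z (closure (inUr U r))) :=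
      tendsto_nhdsWithin_of_tendsto_nhds_of_eventually_within _ hconv
        (Eventually.of_forall fun k => hyK (φ k))
    have hfz : Tendsto (fun k => f (y (φ k))) atTop (nhds (f z)) :=
      ((hf.mono hKU) z hzK).tendsto.comp hmemK
    have hgz : Tendsto (fun k => g (y (φ k))) atTop (nhds (g z)) :=
      ((hg.mono hKU) z hzK).tendsto.comp hmemK
    have hlim : Tendsto (fun k : ℕ => (1 : ℝ) / (φ k + 1)) atTop (nhds 0) :=
      tendsto_one_div_add_atTop_nhds_zero_nat.comp hφ.tendsto_atTop
    have h1 : sSup (upS H (ball x₀ r ∩ U) f t x₀) ≤ f z := by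
      have hA : Tendsto (fun k => sSup (upS H (ball x₀ r ∩ U) f t x₀) - 1 / ((φ k : ℝ) + 1))
          atTop (nhds (sSup (upS H (ball x₀ r ∩ U) f t x₀))) := by
        simpa using tendsto_const_nhds.sub hlim
      exact le_of_tendsto_of_tendsto' hA hfz (fun k => hyf (φ k))
    have h2 : f x₀ - g x₀ ≤ f z - g z := by
      have hA : Tendsto (fun k => (f x₀ - g x₀) - 1 / ((φ k : ℝ) + 1))
          atTop (nhds (f x₀ - g x₀)) := by
        simpa using tendsto_const_nhds.sub hlim
      exact le_of_tendsto_of_tendsto' hA (hfz.sub hgz) (fun k => hyfg (φ k))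
    have hzA : z ∈ {x ∈ closure (inUr U r) |
        sSup ((fun x => f x - g x) '' closure (inUr U r)) ≤ f x - g x} :=
      ⟨hzK, by linarith⟩
    have hzle : f z ≤ f x₀ := hx₀max hzA
    linarith
  -- conclude
  have ePf : sSup (upS H (ball x₀ r ∩ U) f t x₀) = f x₀ := le_antisymm key h5
  have eQf : sInf (dnS H (ball x₀ r ∩ U) f t x₀) = f x₀ := le_antisymm h6 (by linarith)
  have ePg : sSup (upS H (ball x₀ r ∩ U) g t x₀) = g x₀ := le_antisymm (by linarith) h7
  have eQg : sInf (dnS H (ball x₀ r ∩ U) g t x₀) = g x₀ := le_antisymm h8 (by linarith)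
  exact ⟨x₀, hx₀2r, ⟨by rw [hfup, ePf], by rw [hfdn, eQf]⟩,
    ⟨by rw [hgup, ePg], by rw [hgdn, eQg]⟩⟩
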